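/- Let q be an element of a commutative ring (or a real/rational parameter with q ≠ 1 where needed). The q-Stirling numbers of the second kind Ŝ_q[n,k], defined by Ŝ_q[n,k] = Ŝ_q[n-1,k-1] + [k]_q·Ŝ_q[n-1,k] with Ŝ_q[n,0]=Ŝ_q[0,n]=δ_{n,0}, satisfy Carlitz's identity: the Gaussian binomial coefficient [n choose k]_q equals ∑_{j=k}^{n} C(n,j)·(q−1)^{j−k}·Ŝ_q[j,k]. -/
import Mathlib


open Finset

/-- The q-integer `[k]_q = 1 + q + ... + q^(k-1)`. -/
def qint {K : Type*} [CommRing K] (q : K) (k : ℕ) : K := ∑ i ∈ Finset.range k, q ^ i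

/-- The q-Stirling numbers of the second kind. -/
def Shat {K : Type*} [CommRing K] (q : K) : ℕ → ℕ → K
  | 0, 0 => 1
  | 0, _ + 1 => 0
  | _ + 1, 0 => 0
  | n + 1, k + 1 => Shat q n k + qint q (k + 1) * Shat q n (k + 1)

/-- The Gaussian binomial coefficient. -/
def gauss {K : Type*} [CommRing K] (q : K) : ℕ → ℕ → K
  | 0, 0 => 1
  | 0, _ + 1 => 0
  | _ + 1, 0 => 1
  | n + 1, k + 1 => gauss q n k + q ^ (k + 1) * gauss q n (k + 1)

lemma shat_eq_zero {K : Type*} [CommRing K] (q : K) : ∀ j k, j < k → Shat q j k = 0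
  | 0, _+1, _ => rfl
  | j+1, k+1, h => by
    rw [Shat, shat_eq_zero q j k (by omega), shat_eq_zero q j (k+1) (by omega)]
    ring

lemma gauss_eq_zero {K : Type*} [CommRing K] (q : K) : ∀ j k, j < k → gauss q j k = 0
  | 0, _+1, _ => rfl
  | j+1, k+1, h => by
    rw [gauss, gauss_eq_zero q j k (by omega), gauss_eq_zero q j (k+1) (by omega)]
    ring

lemma qint_key {K : Type*} [CommRing K] (q : K) (k : ℕ) :
    (q - 1) * qint q k + 1 = q ^ k := by
  have := geom_sum_mul q k
  unfold qint
  linear_combination this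


theorem stmt_10 {K : Type*} [CommRing K] (q : K) (n k : ℕ) :
    gauss q n k = ∑ j ∈ Finset.Icc k n, (Nat.choose n j : K) * (q - 1) ^ (j - k) * Shat q j k := by
  induction n generalizing k with
  | zero =>
    cases k with
    | zero => simp [gauss, Shat]
    | succ k => rw [Finset.Icc_eq_empty (by omega), Finset.sum_empty]; rfl
  | succ n ih =>
    cases k with
    | zero =>
      rw [show gauss q (n+1) 0 = 1 from rfl, Finset.sum_eq_single 0]
      · simp [Shat]
      · intro j hj hj0
        obtain ⟨m, rfl⟩ := Nat.exists_eq_succ_of_ne_zero hj0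
        simp [Shat]
      · simp
    | succ k =>
      by_cases hkn : k ≤ n
      · -- reindex j = i + 1
        have h1 : ∑ j ∈ Finset.Icc (k+1) (n+1),
              (Nat.choose (n+1) j : K) * (q-1)^(j-(k+1)) * Shat q j (k+1)
            = ∑ i ∈ Finset.Icc k n,
              (Nat.choose (n+1) (i+1) : K) * (q-1)^(i-k) * Shat q (i+1) (k+1) := by
          rw [← Finset.map_add_right_Icc k n 1, Finset.sum_map]
          simp [Nat.succ_sub_succ]
        have h2 : ∀ i ∈ Finset.Icc k n,
            (Nat.choose (n+1) (i+1) : K) * (q-1)^(i-k) * Shat q (i+1) (k+1)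
            = ((Nat.choose n i : K) * (q-1)^(i-k) * Shat q i k
              + qint q (k+1) * ((Nat.choose n i : K) * (q-1)^(i-k) * Shat q i (k+1)))
              + (Nat.choose n (i+1) : K) * (q-1)^(i-k) * Shat q (i+1) (k+1) := by
          intro i _
          rw [Nat.choose_succ_succ, Shat]
          push_cast
          ring
        have hV : (∑ i ∈ Finset.Icc k n,
              (Nat.choose n (i+1) : K) * (q-1)^(i-k) * Shat q (i+1) (k+1))
            = gauss q n (k+1) := by
          have e : ∑ i ∈ Finset.Icc k n,
                (Nat.choose n (i+1) : K) * (q-1)^(i-k) * Shat q (i+1) (k+1)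
              = ∑ j ∈ Finset.Icc (k+1) (n+1),
                (Nat.choose n j : K) * (q-1)^(j-(k+1)) * Shat q j (k+1) := by
            rw [← Finset.map_add_right_Icc k n 1, Finset.sum_map]
            simp [Nat.succ_sub_succ]
          rw [e, Finset.sum_Icc_succ_top (by omega), Nat.choose_succ_self, ih (k+1)]
          simp
        have hW : ∑ i ∈ Finset.Icc k n,
              (Nat.choose n i : K) * (q-1)^(i-k) * Shat q i (k+1)
            = (q-1) * gauss q n (k+1) := by
          rw [← Finset.add_sum_erase _ _ (Finset.mem_Icc.mpr ⟨le_refl k, hkn⟩),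
            shat_eq_zero q k (k+1) (by omega), Finset.Icc_erase_left, ← Finset.Icc_add_one_left_eq_Ioc]
          have e2 : ∀ i ∈ Finset.Icc (k+1) n,
              (Nat.choose n i : K) * (q-1)^(i-k) * Shat q i (k+1)
              = (q-1) * ((Nat.choose n i : K) * (q-1)^(i-(k+1)) * Shat q i (k+1)) := by
            intro i hi
            simp only [Finset.mem_Icc] at hi
            rw [show i - k = (i - (k+1)) + 1 by omega, pow_succ]
            ring
          rw [Finset.sum_congr rfl e2, ← Finset.mul_sum, ← ih (k+1)]
          ring
        rw [h1, Finset.sum_congr rfl h2, Finset.sum_add_distrib, Finset.sum_add_distrib,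
          ← Finset.mul_sum, ← ih k, hV, hW, gauss]
        linear_combination (-(gauss q n (k+1))) * qint_key q (k+1)
      · rw [Finset.Icc_eq_empty (by omega), Finset.sum_empty,
          gauss_eq_zero q (n+1) (k+1) (by omega)]
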